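/- Let (Y, τ₁', τ₂') be a subspace of a bitopological space (X, τ₁, τ₂). If Y is τⱼ-open in X and (Y, τ₁', τ₂') is (i,j)-WS-supernormal in X, then (Y, τ₁', τ₂') is p-strongly normal in X. -/

import Mathlib

def WSSupernormalIn {X : Type*} (ti tj : TopologicalSpace X) (Y : Set X) : Prop :=
  ∀ A B : Set X, A ⊆ Y →
    @IsClosed _ (TopologicalSpace.induced (Subtype.val : Y → X) ti)
      ((Subtype.val : Y → X) ⁻¹' A) →
    @IsClosed X tj B → A ∩ B = ∅ →
    ∃ U V : Set X, U ⊆ Y ∧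
      @IsOpen _ (TopologicalSpace.induced (Subtype.val : Y → X) tj)
        ((Subtype.val : Y → X) ⁻¹' U) ∧
      @IsOpen X ti V ∧ A ⊆ U ∧ B ⊆ V ∧ U ∩ V = ∅

def PStronglyNormalIn {X : Type*} (ti tj : TopologicalSpace X) (Y : Set X) : Prop :=
  ∀ A B : Set X, A ⊆ Y → B ⊆ Y →
    @IsClosed _ (TopologicalSpace.induced (Subtype.val : Y → X) ti)
      ((Subtype.val : Y → X) ⁻¹' A) →
    @IsClosed _ (TopologicalSpace.induced (Subtype.val : Y → X) tj)
      ((Subtype.val : Y → X) ⁻¹' B) →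
    A ∩ B = ∅ →
    ∃ U V : Set X, @IsOpen X tj U ∧ @IsOpen X ti V ∧ A ⊆ U ∧ B ⊆ V ∧ U ∩ V = ∅

theorem stmt6 {X : Type*} (ti tj : TopologicalSpace X) (Y : Set X)
    (hY : @IsOpen X tj Y) (h : WSSupernormalIn ti tj Y) :
    PStronglyNormalIn ti tj Y := by
  intro A B hA hB hAc hBc hAB
  -- B is closed in the subspace: B = Y ∩ C with C tj-closed
  rw [isClosed_induced_iff] at hBc
  obtain ⟨C, hCclosed, hC⟩ := hBc
  have hBC : B = Y ∩ C := by
    have := congrArg (Set.image (Subtype.val : Y → X)) hC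
    rw [Subtype.image_preimage_coe, Subtype.image_preimage_coe] at this
    rw [this]
    exact (Set.inter_eq_right.mpr hB).symm
  set B' := @closure X tj B with hB'def
  have hBsub : B ⊆ B' := @subset_closure X tj B
  have hB'closed : @IsClosed X tj B' := @isClosed_closure X tj B
  have hAB' : A ∩ B' = ∅ := by
    ext x
    simp only [Set.mem_inter_iff, Set.mem_empty_iff_false, iff_false, not_and]
    intro hxA hxB'
    have hxY : x ∈ Y := hA hxA
    have hxC : x ∈ C := by
      have hsub : B' ⊆ C := @closure_minimal X tj B C (by rw [hBC]; exact Set.inter_subset_right) hCclosed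
      exact hsub hxB'
    have : x ∈ A ∩ B := ⟨hxA, by rw [hBC]; exact ⟨hxY, hxC⟩⟩
    rw [hAB] at this
    exact this
  obtain ⟨U, V, hUY, hUopen, hVopen, hAU, hB'V, hUV⟩ := h A B' hA hAc hB'closed hAB'
  -- U is tj-open in X since Y is tj-open
  rw [isOpen_induced_iff] at hUopen
  obtain ⟨W, hWopen, hW⟩ := hUopen
  have hUW : U = W ∩ Y := by
    have := congrArg (Set.image (Subtype.val : Y → X)) hW
    rw [Subtype.image_preimage_coe, Subtype.image_preimage_coe] at this
    rw [Set.inter_comm, this]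
    exact (Set.inter_eq_right.mpr hUY).symm
  refine ⟨U, V, ?_, hVopen, hAU, fun x hx => hB'V (hBsub hx), hUV⟩
  rw [hUW]
  exact @IsOpen.inter X tj W Y hWopen hY
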